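/- Let Ω ⊂ ℝ³ be a bounded smooth domain whose closure is disjoint from the z-axis and which is rotationally symmetric about the z-axis (every rotation of ℝ³ fixing the z-axis pointwise maps Ω onto itself). Define Γ(x,y,z) := (−y, x, 0)/(x²+y²) on Ω. Then the helicity of Γ vanishes: H(Γ) = (1/4π)∫_Ω∫_Ω Γ(p)·(Γ(q) × (p−q)/|p−q|³) d³q d³p = 0. -/

import Mathlib

open MeasureTheory Set Real

noncomputable section

/-- Points/vectors of `ℝ³`. -/
abbrev V3 := Fin 3 → ℝ
/-- Points/vectors of `ℝ²`. -/
abbrev V2 := Fin 2 → ℝ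

/-- Euclidean dot product on `ℝ³`. -/
def dot3 (a b : V3) : ℝ := a 0 * b 0 + a 1 * b 1 + a 2 * b 2

/-- Cross product on `ℝ³`. -/
def cross3 (a b : V3) : V3 :=
  ![a 1 * b 2 - a 2 * b 1, a 2 * b 0 - a 0 * b 2, a 0 * b 1 - a 1 * b 0]

/-- Euclidean norm on `ℝ³`. -/
def norm3 (a : V3) : ℝ := Real.sqrt (dot3 a a)

/-- Standard basis of `ℝ³`. -/
def basis3 (i : Fin 3) : V3 := fun j => if j = i then 1 else 0

/-- `i`-th partial derivative. -/
def pderiv3 (i : Fin 3) (f : V3 → ℝ) (x : V3) : ℝ := fderiv ℝ f x (basis3 i)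

/-- Gradient of a scalar function on `ℝ³`. -/
def grad3 (f : V3 → ℝ) (x : V3) : V3 := fun i => pderiv3 i f x

/-- Curl of a vector field on `ℝ³`. -/
def curl3 (B : V3 → V3) (x : V3) : V3 :=
  ![pderiv3 1 (fun y => B y 2) x - pderiv3 2 (fun y => B y 1) x,
    pderiv3 2 (fun y => B y 0) x - pderiv3 0 (fun y => B y 2) x,
    pderiv3 0 (fun y => B y 1) x - pderiv3 1 (fun y => B y 0) x]

/-- Divergence of a vector field on `ℝ³`. -/
def div3 (B : V3 → V3) (x : V3) : ℝ :=
  pderiv3 0 (fun y => B y 0) x + pderiv3 1 (fun y => B y 1) x + pderiv3 2 (fun y => B y 2) x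

/-- The Biot–Savart field of `B` on `Ω`:
`BS(B)(x) = (1/4π) ∫_Ω B(y) × (x−y)/|x−y|³ dy`. -/
def biotSavart (Ω : Set V3) (B : V3 → V3) (x : V3) : V3 :=
  (4 * π)⁻¹ • ∫ y in Ω, ((norm3 (x - y)) ^ 3)⁻¹ • cross3 (B y) (x - y)

/-- Helicity `H(B) = (1/4π) ∫_Ω ∫_Ω B(x) · (B(y) × (x−y)/|x−y|³) dy dx`. -/
def helicity (Ω : Set V3) (B : V3 → V3) : ℝ :=
  (4 * π)⁻¹ * ∫ x in Ω, ∫ y in Ω,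
    dot3 (B x) (cross3 (B y) (((norm3 (x - y)) ^ 3)⁻¹ • (x - y)))

/-- Squared `L²(Ω)` norm of a vector field. -/
def l2normSq (Ω : Set V3) (B : V3 → V3) : ℝ := ∫ x in Ω, dot3 (B x) (B x)

/-- `B ∈ L²V₀(Ω)`: square-integrable, weakly div-free and tangent to `∂Ω`. -/
def MemL2V0 (Ω : Set V3) (B : V3 → V3) : Prop :=
  MemLp B 2 (volume.restrict Ω) ∧
  ∀ f : V3 → ℝ, ContDiff ℝ (⊤ : ℕ∞) f → ∫ x in Ω, dot3 (B x) (grad3 f x) = 0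

/-- The largest (modified) Biot–Savart eigenvalue, as the sup of the helicity Rayleigh
quotient over nonzero fields in `L²V₀(Ω)`. -/
def lambdaPlus (Ω : Set V3) : ℝ :=
  sSup {h : ℝ | ∃ B : V3 → V3, MemL2V0 Ω B ∧ l2normSq Ω B ≠ 0 ∧
    h = helicity Ω B / l2normSq Ω B}

/-- A bounded smooth domain in `ℝ³`. -/
def IsBoundedSmoothDomain (Ω : Set V3) : Prop :=
  Ω.Nonempty ∧ Bornology.IsBounded Ω ∧ IsOpen Ω ∧ IsConnected Ω ∧
  ∀ p ∈ frontier Ω, ∃ U : Set V3, ∃ g : V3 → ℝ,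
    IsOpen U ∧ p ∈ U ∧ ContDiffOn ℝ (⊤ : ℕ∞) g U ∧
    (∀ x ∈ U, grad3 g x ≠ 0) ∧ Ω ∩ U = {x ∈ U | g x < 0}

/-- `Λ(V)`: supremum of `λ₊` over bounded smooth domains of volume `V`. -/
def LambdaSup (Vol : ℝ) : ℝ :=
  sSup {h : ℝ | ∃ Ω : Set V3, IsBoundedSmoothDomain Ω ∧
    volume Ω = ENNReal.ofReal Vol ∧ h = lambdaPlus Ω}


/-- Rotation of `ℝ³` by angle `θ` about the `z`-axis. -/
def rotZ (θ : ℝ) (w : V3) : V3 :=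
  ![Real.cos θ * w 0 - Real.sin θ * w 1, Real.sin θ * w 0 + Real.cos θ * w 1, w 2]


/-- Reflection of `ℝ³` through the `xz`-plane. -/
def refl3 (w : V3) : V3 := ![w 0, -(w 1), w 2]

lemma refl3_invol (w : V3) : refl3 (refl3 w) = w := by
  funext i; fin_cases i <;> simp [refl3]

lemma refl3_eq_lin : ⇑(Matrix.toLin' (Matrix.diagonal ![(1:ℝ),-1,1])) = refl3 := by
  funext w i
  fin_cases i <;>
    simp [refl3, Matrix.toLin'_apply, Matrix.mulVec_diagonal]

lemma refl3_measurable : Measurable refl3 := by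
  rw [← refl3_eq_lin]
  exact (LinearMap.continuous_on_pi _).measurable

lemma refl3_measurePreserving : MeasurePreserving refl3 volume volume := by
  refine ⟨refl3_measurable, ?_⟩
  rw [← refl3_eq_lin]
  have hdet : Matrix.det (Matrix.diagonal ![(1:ℝ),-1,1]) = -1 := by
    rw [Matrix.det_diagonal, Fin.prod_univ_three]; norm_num; rfl
  rw [Real.map_matrix_volume_pi_eq_smul_volume_pi (by rw [hdet]; norm_num), hdet]
  norm_num

/-- The reflection as a measurable equivalence. -/
def refl3_equiv : V3 ≃ᵐ V3 :=
  { toFun := refl3, invFun := refl3,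
    left_inv := refl3_invol, right_inv := refl3_invol,
    measurable_toFun := refl3_measurable,
    measurable_invFun := refl3_measurable }

lemma refl3_emb : MeasurableEmbedding refl3 := refl3_equiv.measurableEmbedding

lemma norm3_refl3_sub (x y : V3) : norm3 (refl3 x - refl3 y) = norm3 (x - y) := by
  unfold norm3
  congr 1
  simp [dot3, refl3, Pi.sub_apply]
  ring

/-- The helicity integrand of `Γ` is odd under the simultaneous reflection of both
arguments. -/
lemma key_anti (x y : V3) :
    dot3 ((fun w => ((w 0) ^ 2 + (w 1) ^ 2)⁻¹ • ![-(w 1), w 0, 0]) (refl3 x))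
      (cross3 ((fun w => ((w 0) ^ 2 + (w 1) ^ 2)⁻¹ • ![-(w 1), w 0, 0]) (refl3 y))
        (((norm3 (refl3 x - refl3 y)) ^ 3)⁻¹ • (refl3 x - refl3 y))) =
    - dot3 ((fun w => ((w 0) ^ 2 + (w 1) ^ 2)⁻¹ • ![-(w 1), w 0, 0]) x)
      (cross3 ((fun w => ((w 0) ^ 2 + (w 1) ^ 2)⁻¹ • ![-(w 1), w 0, 0]) y)
        (((norm3 (x - y)) ^ 3)⁻¹ • (x - y))) := by
  rw [norm3_refl3_sub]
  simp only [dot3, cross3, refl3, Pi.smul_apply, smul_eq_mul, Pi.sub_apply,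
    Matrix.cons_val_zero, Matrix.cons_val_one, Matrix.head_cons, Matrix.cons_val_two,
    Matrix.tail_cons]
  ring

/-- The helicity of the harmonic Neumann field
`Γ(x,y,z) = (−y,x,0)/(x²+y²)` of an axisymmetric bounded smooth domain whose closure
avoids the `z`-axis vanishes. -/
theorem helicity_axisymmetric_neumann_field_eq_zero (Ω : Set V3)
    (hΩ : IsBoundedSmoothDomain Ω)
    (hax : ∀ w ∈ closure Ω, (w 0) ^ 2 + (w 1) ^ 2 ≠ 0)
    (hsym : ∀ θ : ℝ, rotZ θ '' Ω = Ω) :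
    helicity Ω (fun w => ((w 0) ^ 2 + (w 1) ^ 2)⁻¹ • ![-(w 1), w 0, 0]) = 0 := by
  
  classical
  -- The reflection preserves `Ω`.
  have hmem : ∀ w ∈ Ω, refl3 w ∈ Ω := by
    intro w hw
    have hr : (w 0) ^ 2 + (w 1) ^ 2 ≠ 0 := hax w (subset_closure hw)
    set a := w 0 with ha
    set b := w 1 with hb
    set z : ℂ := ⟨(a ^ 2 - b ^ 2) / (a ^ 2 + b ^ 2), (-(2 * a * b)) / (a ^ 2 + b ^ 2)⟩
      with hzdef
    have hz : ‖z‖ = 1 := by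
      rw [Complex.norm_def, Complex.normSq_mk]
      have : (a ^ 2 - b ^ 2) / (a ^ 2 + b ^ 2) * ((a ^ 2 - b ^ 2) / (a ^ 2 + b ^ 2)) +
          (-(2 * a * b)) / (a ^ 2 + b ^ 2) * ((-(2 * a * b)) / (a ^ 2 + b ^ 2)) = 1 := by
        field_simp
        ring
      rw [this, Real.sqrt_one]
    have hz0 : z ≠ 0 := by
      intro h
      rw [h] at hz
      simp at hz
    have hc : Real.cos z.arg = (a ^ 2 - b ^ 2) / (a ^ 2 + b ^ 2) := by
      rw [Complex.cos_arg hz0, hz, div_one]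
    have hs : Real.sin z.arg = (-(2 * a * b)) / (a ^ 2 + b ^ 2) := by
      rw [Complex.sin_arg, hz, div_one]
    have hrot : rotZ z.arg w ∈ Ω := by
      rw [← hsym z.arg]
      exact mem_image_of_mem _ hw
    have heq : rotZ z.arg w = refl3 w := by
      funext i
      fin_cases i
      · show Real.cos z.arg * w 0 - Real.sin z.arg * w 1 = w 0
        rw [hc, hs, ← ha, ← hb]
        field_simp
        ring
      · show Real.sin z.arg * w 0 + Real.cos z.arg * w 1 = -(w 1)
        rw [hc, hs, ← ha, ← hb]
        field_simp
        ring
      · rfl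
    rwa [heq] at hrot
  have himg : refl3 '' Ω = Ω := by
    apply Subset.antisymm
    · rintro _ ⟨w, hw, rfl⟩
      exact hmem w hw
    · intro w hw
      exact ⟨refl3 w, hmem w hw, refl3_invol w⟩
  -- abbreviations
  set B : V3 → V3 := fun w => ((w 0) ^ 2 + (w 1) ^ 2)⁻¹ • ![-(w 1), w 0, 0] with hB
  set F : V3 → V3 → ℝ := fun x y =>
    dot3 (B x) (cross3 (B y) (((norm3 (x - y)) ^ 3)⁻¹ • (x - y))) with hF
  have inner : ∀ x : V3, (∫ y in Ω, F (refl3 x) y) = - ∫ y in Ω, F x y := by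
    intro x
    calc (∫ y in Ω, F (refl3 x) y) = ∫ y in refl3 '' Ω, F (refl3 x) y := by rw [himg]
      _ = ∫ y in Ω, F (refl3 x) (refl3 y) :=
        refl3_measurePreserving.setIntegral_image_emb refl3_emb _ _
      _ = ∫ y in Ω, - F x y := by
        simp only [hF, hB]
        simp only [key_anti]
      _ = - ∫ y in Ω, F x y := integral_neg _
  have outer : (∫ x in Ω, ∫ y in Ω, F x y) = 0 := by
    have h1 : (∫ x in Ω, ∫ y in Ω, F x y) = - ∫ x in Ω, ∫ y in Ω, F x y := by
      calc (∫ x in Ω, ∫ y in Ω, F x y)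
          = ∫ x in refl3 '' Ω, ∫ y in Ω, F x y := by rw [himg]
        _ = ∫ x in Ω, ∫ y in Ω, F (refl3 x) y :=
            refl3_measurePreserving.setIntegral_image_emb refl3_emb _ _
        _ = ∫ x in Ω, - ∫ y in Ω, F x y := by simp only [inner]
        _ = - ∫ x in Ω, ∫ y in Ω, F x y := integral_neg _
    linarith
  show (4 * π)⁻¹ * (∫ x in Ω, ∫ y in Ω, F x y) = 0
  rw [outer, mul_zero]
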